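/- Let ν ≥ 0 and let α be a real number with |α| ≤ 1. For t ≥ 0 define g_ν(t,·) : [0,∞) → ℝ by g_0(t,ξ) = φ_{0,0}(ξ) + ∑_{n=1}^∞ n C_n^0(α) e^{−n² t} φ_{0,n}(ξ) when ν = 0, and g_ν(t,ξ) = 2^ν Γ(ν) ∑_{n=0}^∞ (ν+n) C_n^ν(α) e^{−n(n+2ν)t} φ_{ν,n}(ξ) when ν > 0. Then for every t ≥ 0 the function ξ ↦ g_ν(t,ξ) has (one-sided) derivative at ξ = 0 equal to α e^{−(2ν+1)t}. -/

import Mathlib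

open Real Set Filter


/-- For real `ν ≥ 0` and integer `n ≥ 0`, the function
`φ_{ν,n}(ξ) = ∑_{m=0}^∞ ξ^(n+2m) / (2^(ν+n+2m) Γ(m+1) Γ(ν+n+m+1))`. -/
noncomputable def phiBessel (ν : ℝ) (n : ℕ) (ξ : ℝ) : ℝ :=
  ∑' m : ℕ, ξ ^ (n + 2 * m) /
    ((2 : ℝ) ^ (ν + n + 2 * (m : ℝ)) * Real.Gamma ((m : ℝ) + 1) * Real.Gamma (ν + n + m + 1))

/-- For real `ν > 0` and integer `n ≥ 0`, the Gegenbauer polynomial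
`C_n^ν(x) = (1/Γ(ν)) ∑_{m=0}^{⌊n/2⌋} (−1)^m Γ(ν+n−m) (2x)^(n−2m) / (m! (n−2m)!)`. -/
noncomputable def gegenbauerC (ν : ℝ) (n : ℕ) (x : ℝ) : ℝ :=
  (1 / Real.Gamma ν) * ∑ m ∈ Finset.range (n / 2 + 1),
    (-1 : ℝ) ^ m * Real.Gamma (ν + n - m) * (2 * x) ^ (n - 2 * m) /
      ((m.factorial : ℝ) * ((n - 2 * m).factorial : ℝ))

/-- The degenerate Gegenbauer polynomial: `C_0^0(x) = 1` and, for `n ≥ 1`,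
`C_n^0(x) = ∑_{m=0}^{⌊n/2⌋} (−1)^m Γ(n−m) (2x)^(n−2m) / (Γ(m+1) Γ(n−2m+1))`. -/
noncomputable def gegenbauerC0 (n : ℕ) (x : ℝ) : ℝ :=
  if n = 0 then 1 else
    ∑ m ∈ Finset.range (n / 2 + 1),
      (-1 : ℝ) ^ m * Real.Gamma ((n : ℝ) - m) * (2 * x) ^ (n - 2 * m) /
        (Real.Gamma ((m : ℝ) + 1) * Real.Gamma ((n : ℝ) - 2 * m + 1))

/-- The function `g_ν(t,ξ)`: for `ν = 0`,
`g_0(t,ξ) = φ_{0,0}(ξ) + ∑_{n=1}^∞ n C_n^0(α) e^(−n²t) φ_{0,n}(ξ)`, and for `ν > 0`,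
`g_ν(t,ξ) = 2^ν Γ(ν) ∑_{n=0}^∞ (ν+n) C_n^ν(α) e^(−n(n+2ν)t) φ_{ν,n}(ξ)`. -/
noncomputable def gFun (ν α t ξ : ℝ) : ℝ :=
  if ν = 0 then
    phiBessel 0 0 ξ +
      ∑' n : ℕ, ((n + 1 : ℕ) : ℝ) * gegenbauerC0 (n + 1) α *
        Real.exp (-((n + 1 : ℕ) : ℝ) ^ 2 * t) * phiBessel 0 (n + 1) ξ
  else
    (2 : ℝ) ^ ν * Real.Gamma ν *
      ∑' n : ℕ, (ν + n) * gegenbauerC ν n α * Real.exp (-((n : ℝ) * ((n : ℝ) + 2 * ν)) * t) *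
        phiBessel ν n ξ


noncomputable def Dden (ν : ℝ) (n m : ℕ) : ℝ :=
  (2 : ℝ) ^ (ν + n + 2 * (m : ℝ)) * Real.Gamma ((m : ℝ) + 1) * Real.Gamma (ν + n + m + 1)

lemma Dden_pos {ν : ℝ} (hν : 0 ≤ ν) (n m : ℕ) : 0 < Dden ν n m := by
  refine mul_pos (mul_pos (rpow_pos_of_pos two_pos _) ?_) ?_
  · exact Real.Gamma_pos_of_pos (by positivity)
  · exact Real.Gamma_pos_of_pos (by positivity)

lemma phiBessel_eq (ν : ℝ) (n : ℕ) (ξ : ℝ) :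
    phiBessel ν n ξ = ∑' m : ℕ, ξ ^ (n + 2 * m) / Dden ν n m := rfl

lemma Gamma_le_Gamma_add_nat {x : ℝ} (hx : 1 ≤ x) (m : ℕ) :
    Real.Gamma x ≤ Real.Gamma (x + m) := by
  induction m with
  | zero => simp
  | succ k ih =>
    have hxk : (1 : ℝ) ≤ x + k := le_add_of_le_of_nonneg hx k.cast_nonneg
    have h1 : Real.Gamma (x + (k + 1 : ℕ)) = (x + k) * Real.Gamma (x + k) := by
      push_cast
      rw [show x + ((k : ℝ) + 1) = (x + k) + 1 by ring,
        Real.Gamma_add_one (by linarith)]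
    rw [h1]
    calc Real.Gamma x ≤ Real.Gamma (x + k) := ih
      _ ≤ (x + k) * Real.Gamma (x + k) :=
        le_mul_of_one_le_left (Real.Gamma_pos_of_pos (by linarith)).le hxk

lemma one_le_Gamma_of_two_le {x : ℝ} (hx : 2 ≤ x) : 1 ≤ Real.Gamma x := by
  rcases eq_or_lt_of_le hx with h | h
  · rw [← h, Real.Gamma_two]
  · rw [← Real.Gamma_two]
    exact (Real.Gamma_strictMonoOn_Ici (by norm_num) (le_of_lt h) h).le

lemma two_pow_le_two_mul_factorial : ∀ k : ℕ, (2 : ℕ) ^ k ≤ 2 * k.factorial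
  | 0 => by norm_num
  | 1 => by norm_num
  | (j+2) => by
    have ih := two_pow_le_two_mul_factorial (j+1)
    rw [pow_succ, Nat.factorial_succ]
    calc 2 ^ (j+1) * 2 ≤ 2 * (j+1).factorial * 2 := by omega
      _ ≤ 2 * ((j + 2) * (j+1).factorial) := by nlinarith [(j+1).factorial_pos]

lemma two_pow_div_factorial_le (k : ℕ) : (2 : ℝ) ^ k / (k.factorial : ℝ) ≤ 2 := by
  rw [div_le_iff₀ (by positivity)]
  exact_mod_cast two_pow_le_two_mul_factorial k

noncomputable def pAux (ν : ℝ) (n : ℕ) (ξ : ℝ) (m : ℕ) : ℝ := ξ ^ (n + 2 * m) / Dden ν n m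

noncomputable def Econst : ℝ := ∑' m : ℕ, (1 : ℝ) / (m.factorial : ℝ)

lemma summable_one_div_factorial : Summable (fun m : ℕ => (1 : ℝ) / (m.factorial : ℝ)) := by
  simpa using Real.summable_pow_div_factorial 1

lemma pAux_nonneg {ν : ℝ} (hν : 0 ≤ ν) {ξ : ℝ} (hξ : 0 ≤ ξ) (n m : ℕ) :
    0 ≤ pAux ν n ξ m :=
  div_nonneg (pow_nonneg hξ _) (Dden_pos hν n m).le

lemma Dden_ge {ν : ℝ} (hν : 0 ≤ ν) (n m : ℕ) :
    (2 : ℝ) ^ (ν + (n : ℝ)) * Real.Gamma (ν + n + 1) * (m.factorial : ℝ) ≤ Dden ν n m := by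
  have h1 : (2 : ℝ) ^ (ν + (n : ℝ)) ≤ (2 : ℝ) ^ (ν + n + 2 * (m : ℝ)) := by
    apply Real.rpow_le_rpow_of_exponent_le one_le_two
    have : (0 : ℝ) ≤ 2 * (m : ℝ) := by positivity
    linarith
  have h2 : Real.Gamma ((m : ℝ) + 1) = (m.factorial : ℝ) := Real.Gamma_nat_eq_factorial m
  have hn0 : (0:ℝ) ≤ (n:ℝ) := Nat.cast_nonneg n
  have h3 : Real.Gamma (ν + n + 1) ≤ Real.Gamma (ν + n + m + 1) := by
    have h := Gamma_le_Gamma_add_nat (x := ν + n + 1) (by linarith) m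
    rwa [show ν + n + 1 + (m:ℝ) = ν + n + m + 1 by ring] at h
  unfold Dden
  rw [h2]
  calc (2 : ℝ) ^ (ν + (n : ℝ)) * Real.Gamma (ν + n + 1) * (m.factorial : ℝ)
      = (2 : ℝ) ^ (ν + (n : ℝ)) * (m.factorial : ℝ) * Real.Gamma (ν + n + 1) := by ring
    _ ≤ (2 : ℝ) ^ (ν + n + 2 * (m : ℝ)) * (m.factorial : ℝ) * Real.Gamma (ν + n + m + 1) := by
        have hΓpos : 0 < Real.Gamma (ν + n + 1) := Real.Gamma_pos_of_pos (by positivity)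
        gcongr

lemma pAux_le_of_mem {ν : ℝ} (hν : 0 ≤ ν) {ξ : ℝ} (hξ : ξ ∈ Icc (0:ℝ) 1) (n m : ℕ) :
    pAux ν n ξ m ≤ 1 / ((2 : ℝ) ^ (ν + (n : ℝ)) * Real.Gamma (ν + n + 1)) * (1 / (m.factorial : ℝ)) := by
  have hD := Dden_pos hν n m
  have hnum : ξ ^ (n + 2 * m) ≤ 1 := pow_le_one₀ hξ.1 hξ.2
  have h2 : (0:ℝ) < (2 : ℝ) ^ (ν + (n : ℝ)) * Real.Gamma (ν + n + 1) :=
    mul_pos (rpow_pos_of_pos two_pos _) (Real.Gamma_pos_of_pos (by positivity))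
  have h2' : (0:ℝ) < (2 : ℝ) ^ (ν + (n : ℝ)) * Real.Gamma (ν + n + 1) * (m.factorial : ℝ) :=
    mul_pos h2 (by exact_mod_cast m.factorial_pos)
  calc pAux ν n ξ m ≤ 1 / Dden ν n m := by
        unfold pAux
        exact (div_le_div_iff_of_pos_right hD).mpr hnum
    _ ≤ 1 / ((2 : ℝ) ^ (ν + (n : ℝ)) * Real.Gamma (ν + n + 1) * (m.factorial : ℝ)) :=
        one_div_le_one_div_of_le h2' (Dden_ge hν n m)
    _ = 1 / ((2 : ℝ) ^ (ν + (n : ℝ)) * Real.Gamma (ν + n + 1)) * (1 / (m.factorial : ℝ)) := by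
        ring

lemma summable_pAux {ν : ℝ} (hν : 0 ≤ ν) {ξ : ℝ} (hξ : ξ ∈ Icc (0:ℝ) 1) (n : ℕ) :
    Summable (pAux ν n ξ) := by
  refine Summable.of_nonneg_of_le (pAux_nonneg hν hξ.1 n) (pAux_le_of_mem hν hξ n)
    (summable_one_div_factorial.mul_left _)

lemma phiBessel_nonneg {ν : ℝ} (hν : 0 ≤ ν) {ξ : ℝ} (hξ : 0 ≤ ξ) (n : ℕ) :
    0 ≤ phiBessel ν n ξ := by
  rw [phiBessel_eq]
  exact tsum_nonneg (fun m => pAux_nonneg hν hξ n m)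

lemma phiBessel_one_le {ν : ℝ} (hν : 0 ≤ ν) (n : ℕ) :
    phiBessel ν n 1 ≤ Econst * (1 / ((2 : ℝ) ^ (ν + (n : ℝ)) * Real.Gamma (ν + n + 1))) := by
  rw [phiBessel_eq]
  have h1 : ∀ m : ℕ, (1:ℝ) ^ (n + 2*m) / Dden ν n m ≤
      1 / ((2 : ℝ) ^ (ν + (n : ℝ)) * Real.Gamma (ν + n + 1)) * (1 / (m.factorial : ℝ)) :=
    fun m => pAux_le_of_mem hν (by constructor <;> norm_num) n m
  calc (∑' m : ℕ, (1:ℝ) ^ (n + 2*m) / Dden ν n m)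
      ≤ ∑' m : ℕ, 1 / ((2 : ℝ) ^ (ν + (n : ℝ)) * Real.Gamma (ν + n + 1)) * (1 / (m.factorial : ℝ)) := by
        refine Summable.tsum_le_tsum h1 (summable_pAux hν (by constructor <;> norm_num) n) ?_
        exact summable_one_div_factorial.mul_left _
    _ = Econst * (1 / ((2 : ℝ) ^ (ν + (n : ℝ)) * Real.Gamma (ν + n + 1))) := by
        rw [tsum_mul_left, Econst]; ring

lemma phiBessel_eq' (ν : ℝ) (n : ℕ) (ξ : ℝ) :
    phiBessel ν n ξ = ∑' m : ℕ, pAux ν n ξ m := rfl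

noncomputable def psiAux (ν : ℝ) (n : ℕ) (ξ : ℝ) : ℝ :=
  ∑' m : ℕ, if n + 2 * m ≤ 1 then 0 else pAux ν n ξ m

lemma summable_psi_term {ν : ℝ} (hν : 0 ≤ ν) {ξ : ℝ} (hξ : ξ ∈ Icc (0:ℝ) 1) (n : ℕ) :
    Summable (fun m : ℕ => if n + 2 * m ≤ 1 then 0 else pAux ν n ξ m) := by
  refine Summable.of_nonneg_of_le (fun m => ?_) (fun m => ?_) (summable_pAux hν hξ n)
  · split_ifs with h
    · exact le_rfl
    · exact pAux_nonneg hν hξ.1 n m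
  · split_ifs with h
    · exact pAux_nonneg hν hξ.1 n m
    · exact le_rfl

lemma psiAux_nonneg {ν : ℝ} (hν : 0 ≤ ν) {ξ : ℝ} (hξ : 0 ≤ ξ) (n : ℕ) :
    0 ≤ psiAux ν n ξ := by
  refine tsum_nonneg fun m => ?_
  split_ifs with h
  · exact le_rfl
  · exact pAux_nonneg hν hξ n m

lemma psiAux_zero {ν : ℝ} (n : ℕ) : psiAux ν n 0 = 0 := by
  unfold psiAux
  have h : ∀ m : ℕ, (if n + 2 * m ≤ 1 then (0:ℝ) else pAux ν n 0 m) = 0 := by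
    intro m
    split_ifs with h
    · rfl
    · unfold pAux
      rw [zero_pow (by omega), zero_div]
  rw [tsum_congr h, tsum_zero]

lemma psiAux_le {ν : ℝ} (hν : 0 ≤ ν) {ξ : ℝ} (hξ : ξ ∈ Icc (0:ℝ) 1) (n : ℕ) :
    psiAux ν n ξ ≤ ξ ^ 2 * phiBessel ν n 1 := by
  rw [phiBessel_eq', ← tsum_mul_left]
  refine Summable.tsum_le_tsum (fun m => ?_) (summable_psi_term hν hξ n)
    ((summable_pAux hν (by constructor <;> norm_num) n).mul_left _)
  have h1 : (0:ℝ) ≤ ξ ^ 2 * pAux ν n 1 m :=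
    mul_nonneg (by positivity) (pAux_nonneg hν zero_le_one n m)
  split_ifs with h
  · exact h1
  · unfold pAux
    rw [one_pow]
    have hle : ξ ^ (n + 2 * m) ≤ ξ ^ 2 := pow_le_pow_of_le_one hξ.1 hξ.2 (by omega)
    rw [mul_one_div]
    exact (div_le_div_iff_of_pos_right (Dden_pos hν n m)).mpr hle

lemma phiBessel_decomp {ν : ℝ} (hν : 0 ≤ ν) {ξ : ℝ} (hξ : ξ ∈ Icc (0:ℝ) 1) (n : ℕ) :
    phiBessel ν n ξ = psiAux ν n ξ + (if n ≤ 1 then ξ ^ n / Dden ν n 0 else 0) := by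
  rw [phiBessel_eq']
  have hsplit : ∀ m : ℕ, pAux ν n ξ m =
      (if n + 2 * m ≤ 1 then 0 else pAux ν n ξ m) +
      (if n + 2 * m ≤ 1 then pAux ν n ξ m else 0) := by
    intro m; split_ifs <;> simp
  have hvz : ∀ m ∉ ({0} : Finset ℕ),
      (if n + 2 * m ≤ 1 then pAux ν n ξ m else 0) = 0 := by
    intro m hm
    have : ¬ (n + 2 * m ≤ 1) := by
      simp only [Finset.mem_singleton] at hm; omega
    rw [if_neg this]
  have hvsummable : Summable (fun m : ℕ => if n + 2 * m ≤ 1 then pAux ν n ξ m else 0) :=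
    summable_of_ne_finset_zero hvz
  rw [tsum_congr hsplit, Summable.tsum_add (summable_psi_term hν hξ n) hvsummable]
  congr 1
  rw [tsum_eq_sum hvz, Finset.sum_singleton]
  simp only [Nat.mul_zero, Nat.add_zero]
  split_ifs with h
  · simp [pAux]
  · rfl

lemma keyDeriv (ν : ℝ) (hν : 0 ≤ ν) (c : ℕ → ℝ)
    (hc : Summable (fun n => |c n| * phiBessel ν n 1)) :
    HasDerivWithinAt (fun ξ => ∑' n : ℕ, c n * phiBessel ν n ξ)
      (c 1 / Dden ν 1 0) (Icc (0:ℝ) 1) 0 := by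
  set K : ℝ := ∑' n : ℕ, |c n| * phiBessel ν n 1 with hK
  have hφ1 : ∀ n, 0 ≤ phiBessel ν n 1 := fun n => phiBessel_nonneg hν zero_le_one n
  -- summability of the psi part
  have hψs : ∀ ξ ∈ Icc (0:ℝ) 1, Summable (fun n => c n * psiAux ν n ξ) := by
    intro ξ hξ
    refine Summable.of_norm_bounded hc fun n => ?_
    rw [norm_mul, Real.norm_eq_abs, Real.norm_eq_abs,
      abs_of_nonneg (psiAux_nonneg hν hξ.1 n)]
    refine mul_le_mul_of_nonneg_left ?_ (abs_nonneg _)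
    calc psiAux ν n ξ ≤ ξ ^ 2 * phiBessel ν n 1 := psiAux_le hν hξ n
      _ ≤ 1 * phiBessel ν n 1 := by
          refine mul_le_mul_of_nonneg_right ?_ (hφ1 n)
          nlinarith [hξ.1, hξ.2]
      _ = phiBessel ν n 1 := one_mul _
  -- the finite part
  have hvz : ∀ ξ : ℝ, ∀ n ∉ ({0, 1} : Finset ℕ),
      c n * (if n ≤ 1 then ξ ^ n / Dden ν n 0 else 0) = 0 := by
    intro ξ n hn
    simp only [Finset.mem_insert, Finset.mem_singleton] at hn
    rw [if_neg (by omega), mul_zero]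
  have hvsum : ∀ ξ : ℝ,
      (∑' n : ℕ, c n * (if n ≤ 1 then ξ ^ n / Dden ν n 0 else 0)) =
        c 0 * (1 / Dden ν 0 0) + c 1 * (ξ / Dden ν 1 0) := by
    intro ξ
    rw [tsum_eq_sum (hvz ξ)]
    rw [Finset.sum_pair (by norm_num)]
    norm_num
  -- decomposition of F on Icc 0 1
  have hF : ∀ ξ ∈ Icc (0:ℝ) 1,
      (∑' n : ℕ, c n * phiBessel ν n ξ) =
        (∑' n : ℕ, c n * psiAux ν n ξ) + (c 0 * (1 / Dden ν 0 0) + c 1 * (ξ / Dden ν 1 0)) := by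
    intro ξ hξ
    have h1 : ∀ n : ℕ, c n * phiBessel ν n ξ =
        c n * psiAux ν n ξ + c n * (if n ≤ 1 then ξ ^ n / Dden ν n 0 else 0) := by
      intro n
      rw [phiBessel_decomp hν hξ n, mul_add]
    rw [tsum_congr h1, Summable.tsum_add (hψs ξ hξ) (summable_of_ne_finset_zero (hvz ξ)), hvsum ξ]
  have hmem0 : (0:ℝ) ∈ Icc (0:ℝ) 1 := by constructor <;> norm_num
  have hF0 : (∑' n : ℕ, c n * phiBessel ν n 0) = c 0 * (1 / Dden ν 0 0) := by
    rw [hF 0 hmem0]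
    have : ∀ n : ℕ, c n * psiAux ν n 0 = 0 := by
      intro n; rw [psiAux_zero, mul_zero]
    rw [tsum_congr this, tsum_zero]
    simp
  -- bound on the psi sum
  have hSb : ∀ ξ ∈ Icc (0:ℝ) 1, |∑' n : ℕ, c n * psiAux ν n ξ| ≤ ξ ^ 2 * K := by
    intro ξ hξ
    have hnorm : Summable (fun n => ‖c n * psiAux ν n ξ‖) := by
      rw [summable_norm_iff]; exact hψs ξ hξ
    calc |∑' n : ℕ, c n * psiAux ν n ξ| ≤ ∑' n : ℕ, ‖c n * psiAux ν n ξ‖ :=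
          norm_tsum_le_tsum_norm hnorm
      _ ≤ ∑' n : ℕ, ξ ^ 2 * (|c n| * phiBessel ν n 1) := by
          refine Summable.tsum_le_tsum (fun n => ?_) hnorm (hc.mul_left _)
          rw [norm_mul, Real.norm_eq_abs, Real.norm_eq_abs,
            abs_of_nonneg (psiAux_nonneg hν hξ.1 n)]
          calc |c n| * psiAux ν n ξ ≤ |c n| * (ξ ^ 2 * phiBessel ν n 1) :=
                mul_le_mul_of_nonneg_left (psiAux_le hν hξ n) (abs_nonneg _)
            _ = ξ ^ 2 * (|c n| * phiBessel ν n 1) := by ring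
      _ = ξ ^ 2 * K := tsum_mul_left
  have hK0 : 0 ≤ K := tsum_nonneg fun n => mul_nonneg (abs_nonneg _) (hφ1 n)
  -- slope argument
  rw [hasDerivWithinAt_iff_tendsto_slope, ← tendsto_sub_nhds_zero_iff]
  apply squeeze_zero_norm' (a := fun ξ => K * ξ)
  · filter_upwards [self_mem_nhdsWithin] with ξ hξ
    obtain ⟨hξI, hξ0'⟩ := hξ
    have hξ0 : ξ ≠ 0 := by simpa using hξ0'
    have hξpos : 0 < ξ := lt_of_le_of_ne hξI.1 (Ne.symm hξ0)
    have hslope : slope (fun ξ => ∑' n : ℕ, c n * phiBessel ν n ξ) 0 ξ - c 1 / Dden ν 1 0 =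
        (∑' n : ℕ, c n * psiAux ν n ξ) / ξ := by
      rw [slope_def_field, hF ξ hξI, hF0]
      field_simp
      ring
    rw [hslope, Real.norm_eq_abs, abs_div, abs_of_pos hξpos]
    rw [div_le_iff₀ hξpos]
    calc |∑' n : ℕ, c n * psiAux ν n ξ| ≤ ξ ^ 2 * K := hSb ξ hξI
      _ = K * ξ * ξ := by ring
  · have : Tendsto (fun ξ : ℝ => K * ξ) (nhds 0) (nhds 0) := by
      simpa using (continuous_mul_left K).tendsto (0:ℝ)
    exact this.mono_left nhdsWithin_le_nhds

lemma Econst_nonneg : 0 ≤ Econst :=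
  tsum_nonneg fun m => by positivity

lemma pAux_mono {ν : ℝ} (hν : 0 ≤ ν) {ξ : ℝ} (hξ : ξ ∈ Icc (0:ℝ) 1) (n m : ℕ) :
    pAux ν n ξ m ≤ pAux ν n 1 m := by
  unfold pAux
  rw [one_pow]
  exact (div_le_div_iff_of_pos_right (Dden_pos hν n m)).mpr (pow_le_one₀ hξ.1 hξ.2)

lemma phiBessel_le_one {ν : ℝ} (hν : 0 ≤ ν) {ξ : ℝ} (hξ : ξ ∈ Icc (0:ℝ) 1) (n : ℕ) :
    phiBessel ν n ξ ≤ phiBessel ν n 1 := by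
  rw [phiBessel_eq', phiBessel_eq']
  exact Summable.tsum_le_tsum (fun m => pAux_mono hν hξ n m) (summable_pAux hν hξ n)
    (summable_pAux hν (by constructor <;> norm_num) n)

lemma summable_linear_geom (a : ℝ) :
    Summable (fun n : ℕ => ((n : ℝ) + a) * (1/2 : ℝ) ^ n) := by
  have h1 : Summable (fun n : ℕ => (n : ℝ) * (1/2 : ℝ) ^ n) := by
    simpa using summable_pow_mul_geometric_of_norm_lt_one (R := ℝ) 1
      (r := (1/2 : ℝ)) (by rw [Real.norm_eq_abs, abs_of_pos (by norm_num : (0:ℝ) < 1/2)]; norm_num)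
  have h2 : Summable (fun n : ℕ => a * (1/2 : ℝ) ^ n) :=
    (summable_geometric_of_lt_one (by norm_num) (by norm_num)).mul_left a
  simpa [add_mul] using h1.add h2

lemma summable_aux {ν : ℝ} (hν : 0 ≤ ν) (B : ℝ) (hB : 0 ≤ B) (b : ℕ → ℝ)
    (hb : ∀ n, 2 ≤ n → |b n| ≤ B * ((ν + n) * (((n : ℝ) + 2) * (1 + Real.Gamma (ν + n))))) :
    Summable (fun n => |b n| * phiBessel ν n 1) := by
  rw [← summable_nat_add_iff 2]
  have hmaj : Summable (fun n : ℕ => (B * Econst * 2) * (((n : ℝ) + 4) * (1/2 : ℝ) ^ (n + 2))) := by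
    have h1 : Summable (fun n : ℕ => ((n : ℝ) + 4) * (1/2 : ℝ) ^ (n + 2)) := by
      have h2 := summable_linear_geom 4
      have he : (fun n : ℕ => ((n : ℝ) + 4) * (1/2 : ℝ) ^ (n + 2)) =
          fun n : ℕ => (1/4 : ℝ) * (((n : ℝ) + 4) * (1/2 : ℝ) ^ n) := by
        funext n; rw [pow_add]; ring
      rw [he]
      exact h2.mul_left _
    exact h1.mul_left _
  refine Summable.of_nonneg_of_le (fun n => ?_) (fun n => ?_) hmaj
  · exact mul_nonneg (abs_nonneg _) (phiBessel_nonneg hν zero_le_one _)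
  · set A : ℝ := ν + ((n : ℝ) + 2) with hA
    have hA2 : (2 : ℝ) ≤ A := by
      have : (0:ℝ) ≤ (n : ℝ) := Nat.cast_nonneg n
      simp only [hA]; linarith
    have hApos : (0:ℝ) < A := by linarith
    have hΓA : (1:ℝ) ≤ Real.Gamma A := one_le_Gamma_of_two_le hA2
    have hΓApos : (0:ℝ) < Real.Gamma A := by linarith
    have hcast : ((n + 2 : ℕ) : ℝ) = (n : ℝ) + 2 := by push_cast; ring
    have hb' : |b (n + 2)| ≤ B * (A * ((((n:ℝ) + 2) + 2) * (1 + Real.Gamma A))) := by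
      have := hb (n + 2) (by omega)
      rw [hcast] at this
      convert this using 4 <;> rw [hA] <;> ring_nf
    have hφ : phiBessel ν (n + 2) 1 ≤
        Econst * (1 / ((2 : ℝ) ^ (ν + ((n + 2 : ℕ) : ℝ)) * Real.Gamma (ν + (n + 2 : ℕ) + 1))) :=
      phiBessel_one_le hν (n + 2)
    have hΓA1 : Real.Gamma (ν + ((n + 2 : ℕ) : ℝ) + 1) = A * Real.Gamma A := by
      rw [hcast, ← hA, Real.Gamma_add_one (by linarith)]
    have h2pow : ((2 : ℝ) ^ (n + 2 : ℕ) : ℝ) ≤ (2 : ℝ) ^ (ν + ((n + 2 : ℕ) : ℝ)) := by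
      rw [← Real.rpow_natCast 2 (n + 2)]
      apply Real.rpow_le_rpow_of_exponent_le one_le_two
      rw [hcast]; linarith
    have h2powpos : (0:ℝ) < (2 : ℝ) ^ (ν + ((n + 2 : ℕ) : ℝ)) := rpow_pos_of_pos two_pos _
    have hstep1 : |b (n + 2)| * phiBessel ν (n + 2) 1 ≤
        (B * (A * ((((n:ℝ) + 2) + 2) * (1 + Real.Gamma A)))) *
          (Econst * (1 / ((2 : ℝ) ^ (ν + ((n + 2 : ℕ) : ℝ)) * (A * Real.Gamma A)))) := by
      rw [← hΓA1]
      exact mul_le_mul hb' hφ (phiBessel_nonneg hν zero_le_one _)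
        (by positivity)
    refine hstep1.trans ?_
    have hq : (B * (A * ((((n:ℝ) + 2) + 2) * (1 + Real.Gamma A)))) *
          (Econst * (1 / ((2 : ℝ) ^ (ν + ((n + 2 : ℕ) : ℝ)) * (A * Real.Gamma A)))) =
        (B * Econst) * (((n:ℝ) + 4) * ((1 + Real.Gamma A) / Real.Gamma A *
          (1 / (2 : ℝ) ^ (ν + ((n + 2 : ℕ) : ℝ))))) := by
      field_simp
      ring
    rw [hq]
    have hr1 : (1 + Real.Gamma A) / Real.Gamma A ≤ 2 := by
      rw [div_le_iff₀ hΓApos]; linarith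
    have hr2 : 1 / (2 : ℝ) ^ (ν + ((n + 2 : ℕ) : ℝ)) ≤ (1/2 : ℝ) ^ (n + 2) := by
      rw [one_div_pow]
      exact one_div_le_one_div_of_le (by positivity) h2pow
    calc (B * Econst) * (((n:ℝ) + 4) * ((1 + Real.Gamma A) / Real.Gamma A *
            (1 / (2 : ℝ) ^ (ν + ((n + 2 : ℕ) : ℝ)))))
        ≤ (B * Econst) * (((n:ℝ) + 4) * (2 * (1/2 : ℝ) ^ (n + 2))) := by
          have hBE : 0 ≤ B * Econst := mul_nonneg hB Econst_nonneg
          have h3 : (1 + Real.Gamma A) / Real.Gamma A *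
              (1 / (2 : ℝ) ^ (ν + ((n + 2 : ℕ) : ℝ))) ≤ 2 * (1/2 : ℝ) ^ (n + 2) :=
            mul_le_mul hr1 hr2 (by positivity) (by norm_num)
          have h4 : (0:ℝ) ≤ (n:ℝ) + 4 := by positivity
          exact mul_le_mul_of_nonneg_left
            (mul_le_mul_of_nonneg_left h3 h4) hBE
      _ = (B * Econst * 2) * (((n : ℝ) + 4) * (1/2 : ℝ) ^ (n + 2)) := by ring

lemma Gamma_coef_le {x : ℝ} (hx : 0 ≤ x) {n m : ℕ} (hm : m ≤ n / 2) :
    Real.Gamma (x + n - m) ≤ Real.Gamma (x + n) := by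
  rcases Nat.eq_zero_or_pos n with h0 | hpos
  · subst h0
    have hm0 : m = 0 := by omega
    subst hm0
    simp
  · have h1 : (1:ℝ) ≤ x + n - m := by
      have hcast : (m:ℝ) + 1 ≤ (n:ℝ) := by exact_mod_cast (by omega : m + 1 ≤ n)
      linarith
    have h := Gamma_le_Gamma_add_nat h1 m
    rwa [show x + n - m + (m:ℝ) = x + n by ring] at h

lemma abs_two_mul_le {α : ℝ} (hα : |α| ≤ 1) : |2 * α| ≤ 2 := by
  rw [abs_mul, abs_two]
  nlinarith [abs_nonneg α]

lemma core_term_le {G : ℝ} (hG : 0 < G) {b : ℝ} (hb0 : 0 ≤ b) (hbG : b ≤ G)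
    {c : ℝ} (hc0 : 0 ≤ c) (hc2 : c ≤ 2) (j k : ℕ) :
    b * c ^ k / ((j.factorial : ℝ) * (k.factorial : ℝ)) ≤ 2 * (1 + G) := by
  have hfj : (1:ℝ) ≤ (j.factorial : ℝ) := by exact_mod_cast j.factorial_pos
  have hfk : (0:ℝ) < (k.factorial : ℝ) := by exact_mod_cast k.factorial_pos
  have h1 : b * c ^ k ≤ G * 2 ^ k :=
    mul_le_mul hbG (pow_le_pow_left₀ hc0 hc2 k) (pow_nonneg hc0 k) hG.le
  calc b * c ^ k / ((j.factorial : ℝ) * (k.factorial : ℝ))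
      ≤ G * 2 ^ k / ((j.factorial : ℝ) * (k.factorial : ℝ)) :=
        (div_le_div_iff_of_pos_right (by positivity)).mpr h1
    _ ≤ G * 2 ^ k / (1 * (k.factorial : ℝ)) := by
        apply div_le_div_of_nonneg_left (by positivity) (by positivity)
        exact mul_le_mul_of_nonneg_right hfj hfk.le
    _ = G * (2 ^ k / (k.factorial : ℝ)) := by rw [one_mul, mul_div_assoc]
    _ ≤ G * 2 := mul_le_mul_of_nonneg_left (two_pow_div_factorial_le k) hG.le
    _ ≤ 2 * (1 + G) := by nlinarith

lemma card_term_le {G : ℝ} (hG : 0 < G) (n : ℕ) :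
    ((n / 2 + 1 : ℕ) : ℝ) * (2 * (1 + G)) ≤ ((n : ℝ) + 2) * (1 + G) := by
  have h : ((n / 2 + 1 : ℕ) : ℝ) * 2 ≤ (n : ℝ) + 2 := by
    exact_mod_cast (by omega : (n / 2 + 1) * 2 ≤ n + 2)
  nlinarith

lemma abs_gegenbauerC_le {ν α : ℝ} (hν : 0 < ν) (hα : |α| ≤ 1) (n : ℕ) :
    |gegenbauerC ν n α| ≤ 1 / Real.Gamma ν * (((n : ℝ) + 2) * (1 + Real.Gamma (ν + n))) := by
  have hΓν : 0 < Real.Gamma ν := Real.Gamma_pos_of_pos hν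
  have hΓνn : 0 < Real.Gamma (ν + n) := Real.Gamma_pos_of_pos (by positivity)
  unfold gegenbauerC
  rw [abs_mul, abs_of_pos (by positivity : (0:ℝ) < 1 / Real.Gamma ν)]
  refine mul_le_mul_of_nonneg_left ?_ (by positivity)
  have hterm : ∀ m ∈ Finset.range (n / 2 + 1),
      |(-1 : ℝ) ^ m * Real.Gamma (ν + n - m) * (2 * α) ^ (n - 2 * m) /
        ((m.factorial : ℝ) * ((n - 2 * m).factorial : ℝ))| ≤ 2 * (1 + Real.Gamma (ν + n)) := by
    intro m hm
    rw [Finset.mem_range] at hm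
    have hm2 : m ≤ n / 2 := by omega
    have hmn : (m : ℝ) ≤ n := by exact_mod_cast hm2.trans (Nat.div_le_self n 2)
    have hΓpos : 0 < Real.Gamma (ν + n - m) := Real.Gamma_pos_of_pos (by linarith)
    have hΓle : Real.Gamma (ν + n - m) ≤ Real.Gamma (ν + n) := Gamma_coef_le hν.le hm2
    rw [abs_div, abs_mul, abs_mul, abs_pow, abs_pow, abs_neg, abs_one, one_pow, one_mul,
      abs_of_pos hΓpos,
      abs_of_pos (by positivity : (0:ℝ) < (m.factorial : ℝ) * ((n - 2*m).factorial : ℝ))]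
    exact core_term_le hΓνn hΓpos.le hΓle (abs_nonneg _) (abs_two_mul_le hα) m (n - 2*m)
  calc |∑ m ∈ Finset.range (n / 2 + 1),
        (-1 : ℝ) ^ m * Real.Gamma (ν + n - m) * (2 * α) ^ (n - 2 * m) /
          ((m.factorial : ℝ) * ((n - 2 * m).factorial : ℝ))|
      ≤ ∑ m ∈ Finset.range (n / 2 + 1),
        |(-1 : ℝ) ^ m * Real.Gamma (ν + n - m) * (2 * α) ^ (n - 2 * m) /
          ((m.factorial : ℝ) * ((n - 2 * m).factorial : ℝ))| := Finset.abs_sum_le_sum_abs _ _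
    _ ≤ ∑ _m ∈ Finset.range (n / 2 + 1), 2 * (1 + Real.Gamma (ν + n)) :=
        Finset.sum_le_sum hterm
    _ = ((n / 2 + 1 : ℕ) : ℝ) * (2 * (1 + Real.Gamma (ν + n))) := by
        rw [Finset.sum_const, Finset.card_range, nsmul_eq_mul]
    _ ≤ ((n : ℝ) + 2) * (1 + Real.Gamma (ν + n)) := card_term_le hΓνn n

lemma abs_gegenbauerC0_le {α : ℝ} (hα : |α| ≤ 1) (n : ℕ) (hn : 1 ≤ n) :
    |gegenbauerC0 n α| ≤ ((n : ℝ) + 2) * (1 + Real.Gamma (n : ℝ)) := by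
  have hΓn : 0 < Real.Gamma (n : ℝ) := Real.Gamma_pos_of_pos (by exact_mod_cast hn)
  unfold gegenbauerC0
  rw [if_neg (by omega)]
  have hterm : ∀ m ∈ Finset.range (n / 2 + 1),
      |(-1 : ℝ) ^ m * Real.Gamma ((n : ℝ) - m) * (2 * α) ^ (n - 2 * m) /
        (Real.Gamma ((m : ℝ) + 1) * Real.Gamma ((n : ℝ) - 2 * m + 1))| ≤
        2 * (1 + Real.Gamma (n : ℝ)) := by
    intro m hm
    rw [Finset.mem_range] at hm
    have hm2 : m ≤ n / 2 := by omega
    have hmn : (m : ℝ) ≤ n := by exact_mod_cast hm2.trans (Nat.div_le_self n 2)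
    have h2m : 2 * m ≤ n := by omega
    have e1 : Real.Gamma ((m : ℝ) + 1) = (m.factorial : ℝ) := Real.Gamma_nat_eq_factorial m
    have e2 : Real.Gamma ((n : ℝ) - 2 * m + 1) = (((n - 2 * m : ℕ)).factorial : ℝ) := by
      rw [show (n : ℝ) - 2 * m + 1 = (((n - 2 * m : ℕ)) : ℝ) + 1 by
        rw [Nat.cast_sub h2m]; push_cast; ring]
      exact Real.Gamma_nat_eq_factorial _
    have hΓpos : 0 < Real.Gamma ((n : ℝ) - m) := Real.Gamma_pos_of_pos (by
      rcases Nat.lt_or_ge m n with h | h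
      · have : (m:ℝ) < n := by exact_mod_cast h
        linarith
      · exfalso; omega)
    have hΓle : Real.Gamma ((n : ℝ) - m) ≤ Real.Gamma (n : ℝ) := by
      have := Gamma_coef_le (le_refl (0:ℝ)) hm2
      simpa using this
    rw [e1, e2]
    rw [abs_div, abs_mul, abs_mul, abs_pow, abs_pow, abs_neg, abs_one, one_pow, one_mul,
      abs_of_pos hΓpos,
      abs_of_pos (by positivity : (0:ℝ) < (m.factorial : ℝ) * ((n - 2*m).factorial : ℝ))]
    exact core_term_le hΓn hΓpos.le hΓle (abs_nonneg _) (abs_two_mul_le hα) m (n - 2*m)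
  calc |∑ m ∈ Finset.range (n / 2 + 1),
        (-1 : ℝ) ^ m * Real.Gamma ((n : ℝ) - m) * (2 * α) ^ (n - 2 * m) /
          (Real.Gamma ((m : ℝ) + 1) * Real.Gamma ((n : ℝ) - 2 * m + 1))|
      ≤ ∑ m ∈ Finset.range (n / 2 + 1),
        |(-1 : ℝ) ^ m * Real.Gamma ((n : ℝ) - m) * (2 * α) ^ (n - 2 * m) /
          (Real.Gamma ((m : ℝ) + 1) * Real.Gamma ((n : ℝ) - 2 * m + 1))| :=
        Finset.abs_sum_le_sum_abs _ _
    _ ≤ ∑ _m ∈ Finset.range (n / 2 + 1), 2 * (1 + Real.Gamma (n : ℝ)) :=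
        Finset.sum_le_sum hterm
    _ = ((n / 2 + 1 : ℕ) : ℝ) * (2 * (1 + Real.Gamma (n : ℝ))) := by
        rw [Finset.sum_const, Finset.card_range, nsmul_eq_mul]
    _ ≤ ((n : ℝ) + 2) * (1 + Real.Gamma (n : ℝ)) := card_term_le hΓn n

noncomputable def c0fun (α t : ℝ) : ℕ → ℝ
  | 0 => 1
  | (k+1) => ((k + 1 : ℕ) : ℝ) * gegenbauerC0 (k + 1) α * Real.exp (-((k + 1 : ℕ) : ℝ) ^ 2 * t)


/-- Let `ν ≥ 0` and let `α` be a real number with `|α| ≤ 1`.  For every `t ≥ 0`, the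
function `ξ ↦ g_ν(t,ξ)` has (one-sided) derivative at `ξ = 0` equal to `α e^(−(2ν+1)t)`. -/
theorem gFun_deriv_at_zero (ν : ℝ) (hν : 0 ≤ ν) (α : ℝ) (hα : |α| ≤ 1)
    (t : ℝ) (ht : 0 ≤ t) :
    HasDerivWithinAt (fun ξ => gFun ν α t ξ) (α * Real.exp (-(2 * ν + 1) * t))
      (Set.Ici 0) 0 := by
  have hIccmem : Icc (0:ℝ) 1 ∈ nhdsWithin (0:ℝ) (Ici 0) := by
    rw [← Ici_inter_Iic]
    exact inter_mem self_mem_nhdsWithin (mem_nhdsWithin_of_mem_nhds (Iic_mem_nhds one_pos))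
  by_cases hν0 : ν = 0
  · -- degenerate case ν = 0
    subst hν0
    set c : ℕ → ℝ := c0fun α t with hcdef
    have hcbound : ∀ n, 2 ≤ n →
        |c n| ≤ 1 * (((0:ℝ) + n) * (((n : ℝ) + 2) * (1 + Real.Gamma ((0:ℝ) + n)))) := by
      intro n hn
      obtain ⟨k, rfl⟩ : ∃ k, n = k + 1 := ⟨n - 1, by omega⟩
      have hgeg := abs_gegenbauerC0_le hα (k + 1) (by omega)
      have hexp1 : Real.exp (-((k + 1 : ℕ) : ℝ) ^ 2 * t) ≤ 1 := by
        rw [Real.exp_le_one_iff]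
        have : (0:ℝ) ≤ ((k + 1 : ℕ) : ℝ) ^ 2 * t := by positivity
        linarith
      have hexp0 : 0 < Real.exp (-((k + 1 : ℕ) : ℝ) ^ 2 * t) := Real.exp_pos _
      have hcval : c (k + 1) = ((k + 1 : ℕ) : ℝ) * gegenbauerC0 (k + 1) α *
          Real.exp (-((k + 1 : ℕ) : ℝ) ^ 2 * t) := rfl
      rw [hcval, abs_mul, abs_mul,
        abs_of_nonneg (Nat.cast_nonneg (k + 1) : (0:ℝ) ≤ ((k + 1 : ℕ) : ℝ)),
        abs_of_pos hexp0]
      have hn0 : (0:ℝ) ≤ ((k + 1 : ℕ) : ℝ) := Nat.cast_nonneg _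
      have step : ((k + 1 : ℕ) : ℝ) * |gegenbauerC0 (k + 1) α| *
          Real.exp (-((k + 1 : ℕ) : ℝ) ^ 2 * t) ≤
          ((k + 1 : ℕ) : ℝ) * ((((k + 1 : ℕ) : ℝ) + 2) * (1 + Real.Gamma ((k + 1 : ℕ) : ℝ))) := by
        calc ((k + 1 : ℕ) : ℝ) * |gegenbauerC0 (k + 1) α| *
              Real.exp (-((k + 1 : ℕ) : ℝ) ^ 2 * t)
            ≤ ((k + 1 : ℕ) : ℝ) * ((((k + 1 : ℕ) : ℝ) + 2) *
                (1 + Real.Gamma ((k + 1 : ℕ) : ℝ))) * 1 := by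
              refine mul_le_mul ?_ hexp1 hexp0.le (by positivity)
              exact mul_le_mul_of_nonneg_left hgeg hn0
          _ = ((k + 1 : ℕ) : ℝ) * ((((k + 1 : ℕ) : ℝ) + 2) *
                (1 + Real.Gamma ((k + 1 : ℕ) : ℝ))) := mul_one _
      calc ((k + 1 : ℕ) : ℝ) * |gegenbauerC0 (k + 1) α| *
            Real.exp (-((k + 1 : ℕ) : ℝ) ^ 2 * t)
          ≤ ((k + 1 : ℕ) : ℝ) * ((((k + 1 : ℕ) : ℝ) + 2) *
              (1 + Real.Gamma ((k + 1 : ℕ) : ℝ))) := step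
        _ = 1 * (((0:ℝ) + (k + 1 : ℕ)) * ((((k + 1 : ℕ) : ℝ) + 2) *
              (1 + Real.Gamma ((0:ℝ) + (k + 1 : ℕ))))) := by rw [zero_add, one_mul]
    have hc : Summable (fun n => |c n| * phiBessel 0 n 1) :=
      summable_aux le_rfl 1 zero_le_one c hcbound
    have hsum : ∀ ξ ∈ Icc (0:ℝ) 1, Summable (fun n => c n * phiBessel 0 n ξ) := by
      intro ξ hξ
      refine Summable.of_norm_bounded hc fun n => ?_
      rw [norm_mul, Real.norm_eq_abs, Real.norm_eq_abs,
        abs_of_nonneg (phiBessel_nonneg le_rfl hξ.1 n)]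
      exact mul_le_mul_of_nonneg_left (phiBessel_le_one le_rfl hξ n) (abs_nonneg _)
    have hEq : ∀ ξ ∈ Icc (0:ℝ) 1, gFun 0 α t ξ = ∑' n : ℕ, c n * phiBessel 0 n ξ := by
      intro ξ hξ
      rw [gFun, if_pos rfl, Summable.tsum_eq_zero_add (hsum ξ hξ)]
      have h0 : c 0 = 1 := rfl
      rw [h0, one_mul]
      exact congrArg (fun z => phiBessel 0 0 ξ + z) (tsum_congr fun n => rfl)
    have hkey := keyDeriv 0 le_rfl c hc
    have hd : HasDerivWithinAt (fun ξ => gFun 0 α t ξ) (c 1 / Dden 0 1 0) (Icc (0:ℝ) 1) 0 :=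
      hkey.congr (fun ξ hξ => hEq ξ hξ) (hEq 0 ⟨le_rfl, zero_le_one⟩)
    have hC1 : gegenbauerC0 1 α = 2 * α := by
      unfold gegenbauerC0
      rw [if_neg one_ne_zero]
      norm_num [Real.Gamma_one, Real.Gamma_two]
    have hD : Dden 0 1 0 = 2 := by
      unfold Dden
      norm_num [Real.Gamma_one]
    have hval : c 1 / Dden 0 1 0 = α * Real.exp (-(2 * 0 + 1) * t) := by
      have hc1 : c 1 = ((1 : ℕ) : ℝ) * gegenbauerC0 1 α * Real.exp (-((1 : ℕ) : ℝ) ^ 2 * t) := rfl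
      rw [hc1, hC1, hD]
      norm_num
      ring
    rw [← hval]
    exact hd.mono_of_mem_nhdsWithin hIccmem
  · -- case ν > 0
    have hνpos : 0 < ν := lt_of_le_of_ne hν (Ne.symm hν0)
    have hΓν : 0 < Real.Gamma ν := Real.Gamma_pos_of_pos hνpos
    have h2ν : (0:ℝ) < (2:ℝ) ^ ν := rpow_pos_of_pos two_pos ν
    set c : ℕ → ℝ := fun n => (2:ℝ) ^ ν * Real.Gamma ν *
      ((ν + n) * gegenbauerC ν n α * Real.exp (-((n : ℝ) * ((n : ℝ) + 2 * ν)) * t)) with hcdef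
    have hcbound : ∀ n, 2 ≤ n →
        |c n| ≤ ((2:ℝ) ^ ν) * ((ν + n) * (((n : ℝ) + 2) * (1 + Real.Gamma (ν + n)))) := by
      intro n _
      have hνn : (0:ℝ) < ν + n := by positivity
      have hexp1 : Real.exp (-((n : ℝ) * ((n : ℝ) + 2 * ν)) * t) ≤ 1 := by
        rw [Real.exp_le_one_iff]
        have : (0:ℝ) ≤ ((n : ℝ) * ((n : ℝ) + 2 * ν)) * t := by positivity
        linarith
      have hexp0 : 0 < Real.exp (-((n : ℝ) * ((n : ℝ) + 2 * ν)) * t) := Real.exp_pos _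
      have hgeg := abs_gegenbauerC_le hνpos hα n
      have hΓνn : 0 < Real.Gamma (ν + n) := Real.Gamma_pos_of_pos hνn
      have hval : |c n| = (2:ℝ) ^ ν * Real.Gamma ν *
          ((ν + n) * |gegenbauerC ν n α| * Real.exp (-((n : ℝ) * ((n : ℝ) + 2 * ν)) * t)) := by
        rw [hcdef]
        simp only []
        rw [abs_mul, abs_mul, abs_mul, abs_mul, abs_of_pos h2ν, abs_of_pos hΓν,
          abs_of_pos hνn, abs_of_pos hexp0]
      rw [hval]
      have step1 : (ν + n) * |gegenbauerC ν n α| * Real.exp (-((n : ℝ) * ((n : ℝ) + 2 * ν)) * t)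
          ≤ (ν + n) * (1 / Real.Gamma ν * (((n : ℝ) + 2) * (1 + Real.Gamma (ν + n)))) := by
        calc (ν + n) * |gegenbauerC ν n α| * Real.exp (-((n : ℝ) * ((n : ℝ) + 2 * ν)) * t)
            ≤ (ν + n) * (1 / Real.Gamma ν * (((n : ℝ) + 2) * (1 + Real.Gamma (ν + n)))) * 1 := by
              refine mul_le_mul ?_ hexp1 hexp0.le (by positivity)
              exact mul_le_mul_of_nonneg_left hgeg hνn.le
          _ = (ν + n) * (1 / Real.Gamma ν * (((n : ℝ) + 2) * (1 + Real.Gamma (ν + n)))) :=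
              mul_one _
      calc (2:ℝ) ^ ν * Real.Gamma ν *
            ((ν + n) * |gegenbauerC ν n α| * Real.exp (-((n : ℝ) * ((n : ℝ) + 2 * ν)) * t))
          ≤ (2:ℝ) ^ ν * Real.Gamma ν *
            ((ν + n) * (1 / Real.Gamma ν * (((n : ℝ) + 2) * (1 + Real.Gamma (ν + n))))) :=
            mul_le_mul_of_nonneg_left step1 (by positivity)
        _ = ((2:ℝ) ^ ν) * ((ν + n) * (((n : ℝ) + 2) * (1 + Real.Gamma (ν + n)))) := by
            field_simp
    have hc : Summable (fun n => |c n| * phiBessel ν n 1) :=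
      summable_aux hν ((2:ℝ) ^ ν) h2ν.le c hcbound
    have hEq : (fun ξ => gFun ν α t ξ) = fun ξ => ∑' n : ℕ, c n * phiBessel ν n ξ := by
      funext ξ
      rw [gFun, if_neg hν0, ← tsum_mul_left]
      exact tsum_congr fun n => by rw [hcdef]; ring
    have hkey := keyDeriv ν hν c hc
    have hval : c 1 / Dden ν 1 0 = α * Real.exp (-(2 * ν + 1) * t) := by
      have hC1 : gegenbauerC ν 1 α = 1 / Real.Gamma ν * (Real.Gamma (ν + 1) * (2 * α)) := by
        unfold gegenbauerC
        congr 1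
        rw [show (1 / 2 + 1 : ℕ) = 1 from rfl, Finset.sum_range_one]
        norm_num
      have hD : Dden ν 1 0 = (2:ℝ) ^ ν * 2 * Real.Gamma (ν + 2) := by
        unfold Dden
        rw [show ν + ((1:ℕ):ℝ) + 2 * ((0:ℕ):ℝ) = ν + 1 by push_cast; ring,
          show ν + ((1:ℕ):ℝ) + ((0:ℕ):ℝ) + 1 = ν + 2 by push_cast; ring,
          show (((0:ℕ):ℝ) + 1) = (1:ℝ) by push_cast; ring,
          Real.Gamma_one, Real.rpow_add two_pos, Real.rpow_one]
        ring
      have hΓ2 : Real.Gamma (ν + 2) = (ν + 1) * Real.Gamma (ν + 1) := by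
        rw [show ν + 2 = (ν + 1) + 1 by ring, Real.Gamma_add_one (by positivity)]
      have hΓ1 : 0 < Real.Gamma (ν + 1) := Real.Gamma_pos_of_pos (by positivity)
      have hc1 : c 1 = (2:ℝ) ^ ν * Real.Gamma ν *
          ((ν + 1) * gegenbauerC ν 1 α * Real.exp (-(2 * ν + 1) * t)) := by
        rw [hcdef]
        simp only [Nat.cast_one]
        rw [show -((1:ℝ) * ((1:ℝ) + 2 * ν)) * t = -(2 * ν + 1) * t by ring]
      rw [hc1, hC1, hD, hΓ2]
      field_simp
    rw [hEq, ← hval]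
    exact hkey.mono_of_mem_nhdsWithin hIccmem
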